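/- On ℝ^4 with coordinates (θ_1, θ_2, p_1, p_2), let π(ℏ) = π_0 + ℏπ_1, where π_0 is the standard Poisson matrix (nonzero entries π_0^{θ_1 p_1} = π_0^{θ_2 p_2} = 1 = −π_0^{p_1 θ_1} = −π_0^{p_2 θ_2}) and π_1 is the antisymmetric matrix with nonzero entries π_1^{p_1 p_2} = −1 = −π_1^{p_2 p_1}, and let ⋆ be the Moyal star-product built from the ℏ-dependent matrix π(ℏ). Let X = p_1 ∂/∂p_1 + p_2 ∂/∂p_2 be the Liouville vector field. Then ℏ∂_ℏ + X is a derivation of ⋆: (ℏ∂_ℏ + X)(F⋆G) = ((ℏ∂_ℏ + X)F)⋆G + F⋆((ℏ∂_ℏ + X)G) for all F,G ∈ C^∞(ℝ^4,ℂ)[[ℏ]]. (Thus the quantization of T*T^2 corresponding to the ℏ-dependent symplectic structure ω_0 + ℏ dθ_1∧dθ_2, whose characteristic class is nonzero but ℏ-independent, admits the classical Liouville vector field as a quantum Liouville operator.) -/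

import Mathlib

/-!  Common definitions: formal Weyl algebras, Moyal products, Weyl-bundle valued
differential forms on ℝ^{2n}, Fedosov connections, star-products on smooth functions,
multidifferential operators and Hochschild coboundaries.  -/

noncomputable section
namespace StarPaper

open scoped BigOperators

/-! ### Formal power series in y -/

/-- The fiber coefficient ring `ℂ[[y^1, …, y^N]]`. -/
abbrev Wc (N : ℕ) := MvPowerSeries (Fin N) ℂ

/-- Build a formal power series from its coefficient function. -/
def Wc.mk {N : ℕ} (f : (Fin N →₀ ℕ) → ℂ) : Wc N := f

/-- Formal partial derivative `∂/∂y^i` on `ℂ[[y]]`. -/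
def yD {N : ℕ} (i : Fin N) (a : Wc N) : Wc N :=
  Wc.mk fun β => ((β i : ℂ) + 1) * MvPowerSeries.coeff (R := ℂ) (β + Finsupp.single i 1) a

/-- Formal iterated partial derivative `∂^α` on `ℂ[[y]]`. -/
def yDM {N : ℕ} (α : Fin N →₀ ℕ) (a : Wc N) : Wc N :=
  Wc.mk fun β =>
    (∏ i : Fin N, (((β i + α i).factorial : ℂ) / ((β i).factorial : ℂ))) *
      MvPowerSeries.coeff (R := ℂ) (β + α) a

/-- Iterated derivatives along a tuple of directions. -/
def iterD {R : Type*} {N : ℕ} (D : Fin N → R → R) : {k : ℕ} → (Fin k → Fin N) → R → R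
  | 0, _, a => a
  | _ + 1, v, a => D (v 0) (iterD D (fun t => v t.succ) a)

/-- The `k`-th term of the Moyal–Weyl product for a constant matrix `π`:
`((-iℏ/2)^k/k!) Σ π^{i₁j₁}⋯π^{i_kj_k} (∂^k a/∂y^{i₁}⋯) (∂^k b/∂y^{j₁}⋯)`. -/
def moyalTerm {R : Type*} [CommRing R] [Module ℂ R] {N : ℕ}
    (D : Fin N → R → R) (π : Matrix (Fin N) (Fin N) ℂ) (k : ℕ) (a b : R) : R :=
  ((-Complex.I / 2) ^ k / (Nat.factorial k : ℂ)) •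
    ∑ i : Fin k → Fin N, ∑ j : Fin k → Fin N,
      (∏ t, π (i t) (j t)) • (iterD D i a * iterD D j b)

/-- Moyal product on formal power series `Σ_m ℏ^m F_m` (coefficients `F : ℕ → R`). -/
def moyalN {R : Type*} [CommRing R] [Module ℂ R] {N : ℕ} (D : Fin N → R → R)
    (π : Matrix (Fin N) (Fin N) ℂ) (F G : ℕ → R) : ℕ → R :=
  fun m => ∑ k ∈ Finset.range (m + 1), ∑ l ∈ Finset.range (m - k + 1),
    moyalTerm D π k (F l) (G (m - k - l))

/-- Moyal product on formal Laurent series `Σ_m ℏ^m F_m` (coefficients `F : ℤ → R`);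
the sum over contributions is finite for series bounded below in `ℏ`-degree. -/
def moyalZ {R : Type*} [CommRing R] [Module ℂ R] {N : ℕ} (D : Fin N → R → R)
    (π : Matrix (Fin N) (Fin N) ℂ) (F G : ℤ → R) : ℤ → R :=
  fun m => ∑ᶠ p : ℕ × ℤ, moyalTerm D π p.1 (F p.2) (G (m - p.1 - p.2))

/-- Moyal term for an `ℏ`-dependent matrix `π(ℏ) = π₀ + ℏπ₁`: the part of the `k`-th
Moyal term in which the product of matrix entries contributes `ℏ^d`. -/
def moyalTermH {R : Type*} [CommRing R] [Module ℂ R] {N : ℕ} (D : Fin N → R → R)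
    (π0 π1 : Matrix (Fin N) (Fin N) ℂ) (k d : ℕ) (a b : R) : R :=
  ((-Complex.I / 2) ^ k / (Nat.factorial k : ℂ)) •
    ∑ i : Fin k → Fin N, ∑ j : Fin k → Fin N,
      (∑ T ∈ Finset.univ.powerset.filter (fun T : Finset (Fin k) => T.card = d),
          (∏ t ∈ T, π1 (i t) (j t)) * ∏ t ∈ Tᶜ, π0 (i t) (j t)) •
        (iterD D i a * iterD D j b)

/-- Moyal product built from the `ℏ`-dependent matrix `π(ℏ) = π₀ + ℏπ₁`. -/
def moyalNH {R : Type*} [CommRing R] [Module ℂ R] {N : ℕ} (D : Fin N → R → R)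
    (π0 π1 : Matrix (Fin N) (Fin N) ℂ) (F G : ℕ → R) : ℕ → R :=
  fun m => ∑ k ∈ Finset.range (m + 1), ∑ d ∈ Finset.range (m - k + 1),
    ∑ l ∈ Finset.range (m - k - d + 1),
      moyalTermH D π0 π1 k d (F l) (G (m - k - d - l))

/-- The standard Poisson matrix `π` on `ℝ^{2n}` (inverse of the standard symplectic
matrix `ω`, normalized by `Σ_m ω_{jm} π^{mn} = δ_j^n`). -/
def stdPi (n : ℕ) : Matrix (Fin (2 * n)) (Fin (2 * n)) ℂ :=
  Matrix.of fun i j =>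
    if (i : ℕ) + n = (j : ℕ) then 1 else if (j : ℕ) + n = (i : ℕ) then -1 else 0

/-- The standard symplectic matrix `ω_{ij}`. -/
def stdOmega (n : ℕ) : Matrix (Fin (2 * n)) (Fin (2 * n)) ℂ := -stdPi n

/-! ### The formal Weyl algebra `W = ℂ[[y,ℏ]]` -/

/-- The formal Weyl algebra as `ℏ`-coefficient sequences. -/
abbrev Wa (N : ℕ) := ℕ → Wc N

/-- Moyal–Weyl product on `W` for a constant matrix `π`. -/
def wmulPi {N : ℕ} (π : Matrix (Fin N) (Fin N) ℂ) (a b : Wa N) : Wa N := moyalN yD π a b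

/-- Moyal–Weyl product on `W` for the standard symplectic Poisson matrix. -/
def wmul {n : ℕ} (a b : Wa (2 * n)) : Wa (2 * n) := wmulPi (stdPi n) a b

/-- The unit `1 ∈ W`. -/
def oneW (N : ℕ) : Wa N := fun m => if m = 0 then 1 else 0

/-- Scalar multiplication by a formal power series `s ∈ ℂ[[ℏ]]` (given by its
coefficients `s : ℕ → ℂ`). -/
def hsmul {N : ℕ} (s : ℕ → ℂ) (a : Wa N) : Wa N :=
  fun m => ∑ l ∈ Finset.range (m + 1), s l • a (m - l)

/-- The operator `E = -(i/2) Σ_j y^j ∂/∂y^j` on `ℂ[[y]]`. -/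
def EulW {N : ℕ} (a : Wc N) : Wc N :=
  Wc.mk fun β => -Complex.I / 2 * (∑ i : Fin N, (β i : ℂ)) * MvPowerSeries.coeff (R := ℂ) β a

/-- `E` on the Weyl algebra, acting on each `ℏ`-coefficient. -/
def EulWa {N : ℕ} (a : Wa N) : Wa N := fun m => EulW (a m)

/-- Termwise derivative `∂/∂ℏ`. -/
def hD {N : ℕ} (a : Wa N) : Wa N := fun m => (((m + 1 : ℕ) : ℂ)) • a (m + 1)

/-- Multiplication by `ℏ`. -/
def hM {N : ℕ} (a : Wa N) : Wa N := fun m => match m with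
  | 0 => 0
  | Nat.succ m' => a m'

/-- Division by `ℏ` (exact on elements divisible by `ℏ`; discards the constant term). -/
def hInv {N : ℕ} (a : Wa N) : Wa N := fun m => a (m + 1)

/-- The `ℏ`-derivative of the Moyal–Weyl product structure:
`c₁(a,b) = ∂(a⋆b)/∂ℏ − (∂a/∂ℏ)⋆b − a⋆(∂b/∂ℏ)`. -/
def c1W {n : ℕ} (a b : Wa (2 * n)) : Wa (2 * n) :=
  hD (wmul a b) - wmul (hD a) b - wmul a (hD b)

/-! ### W-valued differential forms on ℝ^{2n} -/

/-- Points of `ℝ^{2n}`. -/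
abbrev Pt (n : ℕ) := Fin (2 * n) → ℝ

/-- `W`-valued exterior forms on `ℝ^{2n}`: the component at a finite index set
`S = {j₁ < ⋯ < j_q}` is the coefficient of `dx^{j₁} ∧ ⋯ ∧ dx^{j_q}`. -/
abbrev WF (n : ℕ) := Finset (Fin (2 * n)) → Pt n → Wa (2 * n)

/-- Sign `(-1)^{#{j ∈ S, j < i}}` for inserting `dx^i` in front of `dx^S`. -/
def insSign {N : ℕ} (S : Finset (Fin N)) (i : Fin N) : ℂ :=
  (-1) ^ (S.filter fun j => j < i).card

/-- Koszul sign for merging `dx^{S₁} ∧ dx^{S₂}` into increasing order. -/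
def shuffleSign {N : ℕ} (S1 S2 : Finset (Fin N)) : ℂ :=
  (-1) ^ ((S1 ×ˢ S2).filter fun p => p.2 < p.1).card

/-- `∂/∂y^i` on the Weyl algebra. -/
def yDa {N : ℕ} (i : Fin N) (w : Wa N) : Wa N := fun m => yD i (w m)

/-- The operator `δ a = Σ_i dx^i ∧ ∂a/∂y^i`. -/
def deltaW {n : ℕ} (a : WF n) : WF n :=
  fun S x => ∑ i ∈ S, insSign S i • yDa i (a (S.erase i) x)

/-- The partial derivative `∂/∂x^i` of a `W`-valued function, taken coefficientwise. -/
def xD {n : ℕ} (i : Fin (2 * n)) (f : Pt n → Wa (2 * n)) (x : Pt n) : Wa (2 * n) :=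
  fun m => Wc.mk fun β =>
    fderiv ℝ (fun x' => MvPowerSeries.coeff (R := ℂ) β (f x' m)) x (Pi.single i 1)

/-- The exterior derivative `d a = Σ_i dx^i ∧ ∂a/∂x^i` on `W`-valued forms. -/
def extD {n : ℕ} (a : WF n) : WF n :=
  fun S x => ∑ i ∈ S, insSign S i • xD i (a (S.erase i)) x

/-- The product on `W`-valued forms: Moyal–Weyl product combined with wedge product. -/
def wMulF {n : ℕ} (a b : WF n) : WF n :=
  fun S x => ∑ S1 ∈ S.powerset, shuffleSign S1 (S \ S1) • wmul (a S1 x) (b (S \ S1) x)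

/-- Graded commutator `[r, a] = r⋆a − (−1)^{|a|} a⋆r` with a form `r` of degree 1. -/
def comm1 {n : ℕ} (r a : WF n) : WF n :=
  fun S x => wMulF r a S x - (-1 : ℂ) ^ (S.card - 1) • wMulF a r S x

/-- Graded commutator `[u, a] = u⋆a − a⋆u` with a form `u` of even degree. -/
def commE {n : ℕ} (u a : WF n) : WF n := fun S x => wMulF u a S x - wMulF a u S x

/-- The connection `D = −δ + d + (i/ℏ)[r, ·]` determined by a `W`-valued 1-form `r`. -/
def fedD {n : ℕ} (r a : WF n) : WF n :=
  fun S x => -deltaW a S x + extD a S x + Complex.I • hInv (comm1 r a S x)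

/-- A `W`-valued form has smooth coefficients. -/
def WF.Smooth {n : ℕ} (a : WF n) : Prop :=
  ∀ S m β, ContDiff ℝ (⊤ : ℕ∞) fun x => MvPowerSeries.coeff (R := ℂ) β (a S x m)

/-- A `W`-valued form is homogeneous of form-degree `q`. -/
def isForm {n : ℕ} (q : ℕ) (a : WF n) : Prop := ∀ S, S.card ≠ q → a S = 0

/-- A `W`-valued form is scalar: all coefficients are independent of the `y` variables. -/
def isScalar {n : ℕ} (a : WF n) : Prop :=
  ∀ S x m β, β ≠ 0 → MvPowerSeries.coeff (R := ℂ) β (a S x m) = 0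

/-- The constant standard symplectic 2-form `ω = (1/2) Σ ω_{ij} dx^i ∧ dx^j`. -/
def omegaF (n : ℕ) : WF n :=
  fun S _ m =>
    if m = 0 then
      MvPowerSeries.C (σ := Fin (2 * n)) (R := ℂ)
        (∑ i : Fin (2 * n), ∑ j : Fin (2 * n),
          if i < j ∧ S = {i, j} then stdOmega n i j else 0)
    else 0

/-- The curvature `Ω = ω + δr − dr − (i/ℏ) r⋆r` of the connection `−δ + d + (i/ℏ)[r,·]`. -/
def curv {n : ℕ} (r : WF n) : WF n :=
  fun S x => omegaF n S x + deltaW r S x - extD r S x - Complex.I • hInv (wMulF r r S x)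

/-- The operator `δ⁻¹`, acting as `(1/(p+q)) Σ_k y^k ι_k` on the part of `y`-degree `p`
and form-degree `q` (and as `0` for `p = q = 0`). -/
def deltaInv {n : ℕ} (a : WF n) : WF n :=
  fun S x m => Wc.mk fun β =>
    ((((β.sum fun _ e => e) + S.card : ℕ) : ℂ))⁻¹ *
      ∑ k : Fin (2 * n),
        if k ∉ S ∧ 1 ≤ β k then
          insSign S k * MvPowerSeries.coeff (R := ℂ) (β - Finsupp.single k 1) (a (insert k S) x m)
        else 0

/-! ### x-independent W-valued exterior forms (the graded algebra W⊗Λ) -/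

/-- `W`-valued exterior forms with constant coefficients. -/
abbrev WL (n : ℕ) := Finset (Fin (2 * n)) → Wa (2 * n)

/-- `δ` on `W ⊗ Λ`. -/
def deltaWL {n : ℕ} (a : WL n) : WL n :=
  fun S => ∑ i ∈ S, insSign S i • yDa i (a (S.erase i))

/-- Product (Moyal combined with wedge) on `W ⊗ Λ`. -/
def wMulL {n : ℕ} (a b : WL n) : WL n :=
  fun S => ∑ S1 ∈ S.powerset, shuffleSign S1 (S \ S1) • wmul (a S1) (b (S \ S1))

/-- `E` on `W ⊗ Λ`, acting on the `W`-coefficients. -/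
def EulL {n : ℕ} (a : WL n) : WL n := fun S => EulWa (a S)

/-- The `W`-valued 1-form `Σ_{i,j} ω_{ij} y^i dx^j`. -/
def oydxW (n : ℕ) : WL n :=
  fun S m =>
    if m = 0 then
      ∑ j : Fin (2 * n),
        (if S = {j} then ∑ i : Fin (2 * n), stdOmega n i j • MvPowerSeries.X i else 0)
    else 0

/-- The 1-form `K₀ = −(Er − iℏ ∂r/∂ℏ + i r + (i/2) Σ ω_{ij} y^i dx^j)`. -/
def K0 {n : ℕ} (r : WF n) : WF n :=
  fun S x =>
    -(EulWa (r S x) - Complex.I • hM (hD (r S x)) + Complex.I • r S x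
      + (Complex.I / 2) • oydxW n S)

/-- The quantum Liouville-type operator `ρ(u) = (ℏ/i) ∂u/∂ℏ + E u`. -/
def rhoW {n : ℕ} (u : WF n) : WF n :=
  fun S x m => (-Complex.I * (m : ℂ)) • u S x m + EulW (u S x m)

/-- `c₁` extended to `W`-valued forms. -/
def c1F {n : ℕ} (a b : WF n) : WF n :=
  fun S x => ∑ S1 ∈ S.powerset, shuffleSign S1 (S \ S1) • c1W (a S1 x) (b (S \ S1) x)

/-! ### The Laurent (ℏ-inverted) Weyl algebra and forms -/

/-- The extended Weyl algebra `W⁺ = ℂ[[y]][ℏ⁻¹,ℏ]]` as `ℏ`-coefficient sequences. -/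
abbrev WaZ (N : ℕ) := ℤ → Wc N

/-- Moyal–Weyl product on `W⁺` for a constant matrix `π`. -/
def wmulZPi {N : ℕ} (π : Matrix (Fin N) (Fin N) ℂ) (a b : WaZ N) : WaZ N := moyalZ yD π a b

/-- Moyal–Weyl product on `W⁺` for the standard symplectic Poisson matrix. -/
def wmulZ {n : ℕ} (a b : WaZ (2 * n)) : WaZ (2 * n) := wmulZPi (stdPi n) a b

/-- `W⁺`-valued exterior forms on `ℝ^{2n}`. -/
abbrev WFZ (n : ℕ) := Finset (Fin (2 * n)) → Pt n → WaZ (2 * n)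

/-- `∂/∂y^i` on `W⁺`. -/
def yDaZ {N : ℕ} (i : Fin N) (w : WaZ N) : WaZ N := fun m => yD i (w m)

/-- `δ` on `W⁺`-valued forms. -/
def deltaZ {n : ℕ} (a : WFZ n) : WFZ n :=
  fun S x => ∑ i ∈ S, insSign S i • yDaZ i (a (S.erase i) x)

/-- `∂/∂x^i` on `W⁺`-valued functions. -/
def xDZ {n : ℕ} (i : Fin (2 * n)) (f : Pt n → WaZ (2 * n)) (x : Pt n) : WaZ (2 * n) :=
  fun m => Wc.mk fun β =>
    fderiv ℝ (fun x' => MvPowerSeries.coeff (R := ℂ) β (f x' m)) x (Pi.single i 1)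

/-- Exterior derivative on `W⁺`-valued forms. -/
def extDZ {n : ℕ} (a : WFZ n) : WFZ n :=
  fun S x => ∑ i ∈ S, insSign S i • xDZ i (a (S.erase i)) x

/-- Product on `W⁺`-valued forms. -/
def wMulZF {n : ℕ} (a b : WFZ n) : WFZ n :=
  fun S x => ∑ S1 ∈ S.powerset, shuffleSign S1 (S \ S1) • wmulZ (a S1 x) (b (S \ S1) x)

/-- Graded commutator with a 1-form, on `W⁺`-valued forms. -/
def comm1Z {n : ℕ} (r a : WFZ n) : WFZ n :=
  fun S x => wMulZF r a S x - (-1 : ℂ) ^ (S.card - 1) • wMulZF a r S x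

/-- Division by `ℏ` on `W⁺` (exact: a shift of Laurent coefficients). -/
def shiftZ {N : ℕ} (a : WaZ N) : WaZ N := fun m => a (m + 1)

/-- The connection `D = −δ + d + (i/ℏ)[r,·]` on `W⁺`-valued forms. -/
def fedDZ {n : ℕ} (r a : WFZ n) : WFZ n :=
  fun S x => -deltaZ a S x + extDZ a S x + Complex.I • shiftZ (comm1Z r a S x)

/-- Termwise `∂/∂ℏ` on `W⁺`. -/
def hDZ {N : ℕ} (a : WaZ N) : WaZ N := fun m => ((m + 1 : ℤ) : ℂ) • a (m + 1)

/-- `∂/∂ℏ` on `W⁺`-valued forms. -/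
def hDZF {n : ℕ} (a : WFZ n) : WFZ n := fun S x => hDZ (a S x)

/-- `E` on `W⁺`. -/
def EulZ {N : ℕ} (a : WaZ N) : WaZ N := fun m => EulW (a m)

/-- `E` on `W⁺`-valued forms. -/
def EulZF {n : ℕ} (a : WFZ n) : WFZ n := fun S x => EulZ (a S x)

/-- `c₁` on `W⁺`. -/
def c1Za {n : ℕ} (a b : WaZ (2 * n)) : WaZ (2 * n) :=
  hDZ (wmulZ a b) - wmulZ (hDZ a) b - wmulZ a (hDZ b)

/-- `c₁` on `W⁺`-valued forms. -/
def c1ZF {n : ℕ} (a b : WFZ n) : WFZ n :=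
  fun S x => ∑ S1 ∈ S.powerset, shuffleSign S1 (S \ S1) • c1Za (a S1 x) (b (S \ S1) x)

/-- Smoothness of the coefficients of a `W⁺`-valued form. -/
def WFZ.Smooth {n : ℕ} (a : WFZ n) : Prop :=
  ∀ S m β, ContDiff ℝ (⊤ : ℕ∞) fun x => MvPowerSeries.coeff (R := ℂ) β (a S x m)

/-- Homogeneity of form-degree `q` for `W⁺`-valued forms. -/
def isFormZ {n : ℕ} (q : ℕ) (a : WFZ n) : Prop := ∀ S, S.card ≠ q → a S = 0

/-- A `W⁺`-valued form has power series coefficients (no negative powers of `ℏ`). -/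
def PSupp {n : ℕ} (a : WFZ n) : Prop := ∀ S x m, m < 0 → a S x m = 0

/-- A Laurent series is bounded below in `ℏ`-degree. -/
def BddZ {α : Type*} [Zero α] (f : ℤ → α) : Prop :=
  ∃ N : ℕ, ∀ m : ℤ, m < -(N : ℤ) → f m = 0

/-! ### Smooth functions and star-products on ℝ^N -/

/-- Complex-valued functions on `ℝ^N`. -/
abbrev SmFn (N : ℕ) := (Fin N → ℝ) → ℂ

/-- Partial derivative `∂/∂x^i` of a (smooth) function. -/
def xDf {N : ℕ} (i : Fin N) (f : SmFn N) : SmFn N := fun x => fderiv ℝ f x (Pi.single i 1)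

/-- Iterated partial derivative `∂^α`. -/
def xDfM {N : ℕ} (α : Fin N →₀ ℕ) (f : SmFn N) : SmFn N :=
  (List.finRange N).foldr (fun i g => (xDf i)^[α i] g) f

/-- Formal power series with function coefficients: `C^∞(ℝ^N,ℂ)[[ℏ]]`. -/
abbrev SmSer (N : ℕ) := ℕ → SmFn N

/-- Formal Laurent series with function coefficients: `C^∞(ℝ^N,ℂ)[ℏ⁻¹,ℏ]]`. -/
abbrev SmLau (N : ℕ) := ℤ → SmFn N

/-- All coefficients of a series are smooth. -/
def SmSer.Smooth {N : ℕ} (F : SmSer N) : Prop := ∀ m, ContDiff ℝ (⊤ : ℕ∞) (F m)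

/-- All coefficients of a Laurent series are smooth. -/
def SmLau.Smooth {N : ℕ} (F : SmLau N) : Prop := ∀ m, ContDiff ℝ (⊤ : ℕ∞) (F m)

/-- The Moyal star-product on `C^∞(ℝ^N,ℂ)[[ℏ]]` for a constant matrix `π`. -/
def fMul {N : ℕ} (π : Matrix (Fin N) (Fin N) ℂ) (F G : SmSer N) : SmSer N :=
  moyalN xDf π F G

/-- The Moyal star-product on Laurent series. -/
def fMulZ {N : ℕ} (π : Matrix (Fin N) (Fin N) ℂ) (F G : SmLau N) : SmLau N :=
  moyalZ xDf π F G

/-- The Moyal star-product with `ℏ`-dependent matrix `π(ℏ) = π₀ + ℏπ₁`. -/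
def fMulH {N : ℕ} (π0 π1 : Matrix (Fin N) (Fin N) ℂ) (F G : SmSer N) : SmSer N :=
  moyalNH xDf π0 π1 F G

/-- The constant series `1`. -/
def oneSer (N : ℕ) : SmSer N := fun m => if m = 0 then (fun _ => 1) else 0

/-- The standard Poisson bracket `{f,g} = Σ π^{ij} ∂_i f ∂_j g` on `ℝ^{2n}`. -/
def pb (n : ℕ) (f g : SmFn (2 * n)) : SmFn (2 * n) :=
  fun x => ∑ i, ∑ j, stdPi n i j * xDf i f x * xDf j g x

/-! ### Multidifferential operators and star-products -/

/-- A `k`-multidifferential operator on `C^∞(ℝ^N,ℂ)`: a finite sum of terms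
`u(x) (∂^{α₁}f₁)⋯(∂^{α_k}f_k)`, recorded by its finitely many coefficients. -/
abbrev MDOp (N k : ℕ) := (Fin k → (Fin N →₀ ℕ)) →₀ SmFn N

/-- Action of a multidifferential operator. -/
def MDOp.app {N k : ℕ} (c : MDOp N k) (f : Fin k → SmFn N) : SmFn N :=
  fun x => c.sum fun T u => u x * ∏ t, xDfM (T t) (f t) x

/-- A multidifferential operator has smooth coefficients. -/
def MDOp.Smooth {N k : ℕ} (c : MDOp N k) : Prop := ∀ T, ContDiff ℝ (⊤ : ℕ∞) (c T)

/-- A family of bidifferential operators `C_k`, extended `ℂ[[ℏ]]`-bilinearly: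
`F ⋆ G = Σ ℏ^{k+l+l'} C_k(F_l, G_{l'})`. -/
def starN {N : ℕ} (C : ℕ → MDOp N 2) (F G : SmSer N) : SmSer N :=
  fun m => ∑ k ∈ Finset.range (m + 1), ∑ l ∈ Finset.range (m - k + 1),
    MDOp.app (C k) ![F l, G (m - k - l)]

/-- The `ℂ[ℏ⁻¹,ℏ]]`-bilinear extension of a star-product to Laurent series. -/
def starZ {N : ℕ} (C : ℕ → MDOp N 2) (F G : SmLau N) : SmLau N :=
  fun m => ∑ᶠ p : ℕ × ℤ, MDOp.app (C p.1) ![F p.2, G (m - p.1 - p.2)]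

/-- Action of a Laurent cochain `c = Σ_l ℏ^l c_l` of multidifferential operators
on a `k`-tuple of Laurent series. -/
def lac {N k : ℕ} (cc : ℤ → MDOp N k) (u : Fin k → SmLau N) : SmLau N :=
  fun m => ∑ᶠ v : Fin k → ℤ, MDOp.app (cc (m - ∑ t, v t)) fun t => u t (v t)

/-- A differential star-product on `ℝ^{2n}` quantizing the standard symplectic
structure: `f ⋆ g = Σ ℏ^k C_k(f,g)` with `C_k` bidifferential, `C₀(f,g) = fg`,
`1` a unit, `⋆` associative, and `C₁(f,g) − C₁(g,f) = −i{f,g}`. -/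
structure DiffStar (n : ℕ) where
  C : ℕ → MDOp (2 * n) 2
  smooth : ∀ k, MDOp.Smooth (C k)
  C0 : ∀ f g : SmFn (2 * n), MDOp.app (C 0) ![f, g] = f * g
  unit_left : ∀ F : SmSer (2 * n), SmSer.Smooth F → starN C (oneSer (2 * n)) F = F
  unit_right : ∀ F : SmSer (2 * n), SmSer.Smooth F → starN C F (oneSer (2 * n)) = F
  assoc : ∀ F G H : SmSer (2 * n), SmSer.Smooth F → SmSer.Smooth G → SmSer.Smooth H →
    starN C (starN C F G) H = starN C F (starN C G H)
  C1skew : ∀ f g : SmFn (2 * n), ContDiff ℝ (⊤ : ℕ∞) f → ContDiff ℝ (⊤ : ℕ∞) g →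
    MDOp.app (C 1) ![f, g] - MDOp.app (C 1) ![g, f] = fun x => -Complex.I * pb n f g x

/-! ### Hochschild coboundary -/

/-- The Hochschild coboundary `b̃` of a `k`-cochain with respect to a product `mul`. -/
def hoch {A : Type*} [AddCommGroup A] (mul : A → A → A) {k : ℕ}
    (c : (Fin k → A) → A) : (Fin (k + 1) → A) → A :=
  fun u =>
    mul (u 0) (c fun t => u t.succ)
      + ∑ i : Fin k, ((-1 : ℤ) ^ ((i : ℕ) + 1)) •
          c (fun j => if (j : ℕ) < (i : ℕ) then u j.castSucc
            else if (j : ℕ) = (i : ℕ) then mul (u j.castSucc) (u j.succ)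
            else u j.succ)
      + ((-1 : ℤ) ^ (k + 1)) • mul (c fun t => u t.castSucc) (u (Fin.last k))

/-! ### Formal differential operators on ℂ[[y]] -/

/-- A formal `k`-differential operator on `ℂ[[y^1,…,y^N]]`:
`c(a₁,…,a_k) = Σ_T u^T (∂^{T 1}a₁)⋯(∂^{T k}a_k)` with coefficients
`u^T ∈ ℂ[[y]]` such that for each degree `d` only finitely many tuples `T` have a
coefficient containing a nonzero monomial of degree `≤ d`. -/
structure FDOp (N k : ℕ) where
  u : (Fin k → (Fin N →₀ ℕ)) → Wc N
  fin : ∀ d : ℕ,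
    {T : Fin k → (Fin N →₀ ℕ) | ∃ β : Fin N →₀ ℕ,
      (β.sum fun _ e => e) ≤ d ∧ MvPowerSeries.coeff (R := ℂ) β (u T) ≠ 0}.Finite

/-- Action of a formal differential operator (the defining sum converges in the
`y`-adic topology; each coefficient receives only finitely many contributions). -/
def FDOp.app {N k : ℕ} (P : FDOp N k) (a : Fin k → Wc N) : Wc N :=
  Wc.mk fun β => ∑ᶠ T : Fin k → (Fin N →₀ ℕ),
    MvPowerSeries.coeff (R := ℂ) β (P.u T * ∏ t, yDM (T t) (a t))

/-- Action of a Laurent cochain `c = Σ_l ℏ^l c_l` of formal differential operators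
on a `k`-tuple of elements of `W⁺`. -/
def flac {N k : ℕ} (cc : ℤ → FDOp N k) (a : Fin k → WaZ N) : WaZ N :=
  fun m => ∑ᶠ v : Fin k → ℤ, FDOp.app (cc (m - ∑ t, v t)) fun t => a t (v t)

/-! ### Flat sections, Taylor series and quantum exponential -/

/-- Fiberwise Taylor series of a smooth function at `x`. -/
def taylorW {N : ℕ} (f : SmFn N) (x : Fin N → ℝ) : Wc N :=
  Wc.mk fun β => (∏ i : Fin N, ((β i).factorial : ℂ))⁻¹ * xDfM β f x

/-- Sections of the Weyl bundle over `ℝ^{2n}` (W-valued 0-forms). -/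
abbrev Sect (n : ℕ) := Pt n → Wa (2 * n)

/-- The fiberwise Taylor lift of a series of smooth functions. -/
def taylorS {n : ℕ} (F : SmSer (2 * n)) : Sect n := fun x m => taylorW (F m) x

/-- A section has smooth coefficients. -/
def Sect.Smooth {n : ℕ} (u : Sect n) : Prop :=
  ∀ m β, ContDiff ℝ (⊤ : ℕ∞) fun x => MvPowerSeries.coeff (R := ℂ) β (u x m)

/-- A section is flat for `D = −δ + d`: its component equations read
`∂u/∂x^i = ∂u/∂y^i` for all `i`. -/
def Sect.Flat {n : ℕ} (u : Sect n) : Prop :=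
  ∀ (i : Fin (2 * n)) (x : Pt n), xD i u x = yDa i (u x)

/-- The symbol map `σ(u) = u|_{y=0}`. -/
def sigma {n : ℕ} (u : Sect n) : SmSer (2 * n) :=
  fun m x => MvPowerSeries.coeff (R := ℂ) 0 (u x m)

/-- Fiberwise Moyal–Weyl product of sections. -/
def wmulS {n : ℕ} (u v : Sect n) : Sect n := fun x => wmul (u x) (v x)

/-! ### Vector fields and Liouville-type operators -/

/-- Action of a vector field `X = Σ_j X^j ∂_j` on a function. -/
def XAct {N : ℕ} (X : Fin N → SmFn N) (f : SmFn N) : SmFn N :=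
  fun x => ∑ j, X j x * xDf j f x

/-- A smooth function viewed as a series concentrated in `ℏ`-degree `0`. -/
def embS {N : ℕ} (f : SmFn N) : SmSer N := fun m => if m = 0 then f else 0

/-- The Hochschild coboundary `b̃X(f,g) = f⋆(Xg) − X(f⋆g) + (Xf)⋆g` of a vector
field, for the Moyal star-product with constant matrix `π`. -/
def bXMoyal {N : ℕ} (π : Matrix (Fin N) (Fin N) ℂ) (X : Fin N → SmFn N)
    (f g : SmFn N) : SmSer N :=
  fMul π (embS f) (embS (XAct X g)) - (fun m => XAct X (fMul π (embS f) (embS g) m))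
    + fMul π (embS (XAct X f)) (embS g)

/-- The operator `ℏ ∂_ℏ + X` on `C^∞(ℝ^N,ℂ)[[ℏ]]`. -/
def LOp {N : ℕ} (X : Fin N → SmFn N) (F : SmSer N) : SmSer N :=
  fun m x => (m : ℂ) * F m x + XAct X (F m) x

/-- The derivative of a star-product with respect to `ℏ`:
`c(f,g) = Σ_{k≥1} k ℏ^{k-1} C_k(f,g)`, extended `ℂ[[ℏ]]`-bilinearly. -/
def dStar {N : ℕ} (C : ℕ → MDOp N 2) (F G : SmSer N) : SmSer N :=
  fun m => ∑ k ∈ Finset.Icc 1 (m + 1), (k : ℂ) •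
    ∑ l ∈ Finset.range (m + 1 - k + 1), MDOp.app (C k) ![F l, G (m + 1 - k - l)]

end StarPaper
namespace StarPaper

/-- The standard Poisson matrix on `T*T² = ℝ⁴` with coordinates `(θ₁, θ₂, p₁, p₂)`. -/
def piT0 : Matrix (Fin 4) (Fin 4) ℂ :=
  !![0, 0, 1, 0; 0, 0, 0, 1; -1, 0, 0, 0; 0, -1, 0, 0]

/-- The bivector `π₁ = −∂/∂p₁ ∧ ∂/∂p₂` (nonzero entries `π₁^{p₁p₂} = −1 = −π₁^{p₂p₁}`). -/
def piT1 : Matrix (Fin 4) (Fin 4) ℂ :=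
  !![0, 0, 0, 0; 0, 0, 0, 0; 0, 0, 0, -1; 0, 0, 1, 0]

/-- The Liouville vector field `X = p₁ ∂/∂p₁ + p₂ ∂/∂p₂`. -/
def liouvilleT : Fin 4 → SmFn 4 :=
  fun j x => if j = 2 then (x 2 : ℂ) else if j = 3 then (x 3 : ℂ) else 0

/-! ### Auxiliary lemmas for the torus example -/

lemma le_inf1 : (1 : WithTop ℕ∞) ≤ ((⊤:ℕ∞) : WithTop ℕ∞) := by
  exact_mod_cast (le_top : (1:ℕ∞) ≤ ⊤)
lemma le_inf2 : (2 : WithTop ℕ∞) ≤ ((⊤:ℕ∞) : WithTop ℕ∞) := by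
  have h : ((2:ℕ∞) : WithTop ℕ∞) = 2 := by norm_cast
  rw [← h]; exact_mod_cast (le_top : (2:ℕ∞) ≤ ⊤)
lemma inf_add_one : ((⊤:ℕ∞) : WithTop ℕ∞) + 1 ≤ ((⊤:ℕ∞) : WithTop ℕ∞) := by
  rw [ENat.coe_top_add_one]

/-- Smoothness of a function on `ℝ⁴`. -/
abbrev Sm (f : SmFn 4) : Prop := ContDiff ℝ (⊤ : ℕ∞) f

lemma Sm.diff {f : SmFn 4} (hf : Sm f) : Differentiable ℝ f := hf.differentiable (by simp)

lemma Sm.xD {f : SmFn 4} (hf : Sm f) (i : Fin 4) : Sm (StarPaper.xDf i f) := by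
  have h : ContDiff ℝ (⊤ : ℕ∞) (fderiv ℝ f) := hf.fderiv_right inf_add_one
  exact h.clm_apply contDiff_const

lemma Sm.add {f g : SmFn 4} (hf : Sm f) (hg : Sm g) : Sm (f + g) := ContDiff.add hf hg
lemma Sm.mul {f g : SmFn 4} (hf : Sm f) (hg : Sm g) : Sm (f * g) := ContDiff.mul hf hg
lemma Sm.smul (c : ℂ) {f : SmFn 4} (hf : Sm f) : Sm (c • f) := ContDiff.const_smul c hf
lemma Sm.zero : Sm (0 : SmFn 4) := contDiff_const
lemma Sm.sum {α : Type*} (s : Finset α) (f : α → SmFn 4) (h : ∀ a ∈ s, Sm (f a)) :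
    Sm (∑ a ∈ s, f a) := by
  classical
  induction s using Finset.cons_induction with
  | empty => simpa using Sm.zero
  | cons a s ha ih =>
    rw [Finset.sum_cons]
    exact (h a (Finset.mem_cons_self a s)).add
      (ih fun b hb => h b (Finset.mem_cons_of_mem hb))

lemma xDf_add {f g : SmFn 4} (hf : Differentiable ℝ f) (hg : Differentiable ℝ g) (i : Fin 4) :
    xDf i (f + g) = xDf i f + xDf i g := by
  funext x
  show fderiv ℝ (fun y => f y + g y) x (Pi.single i 1) = _
  rw [fderiv_fun_add (hf x) (hg x)]
  simp [xDf]

lemma xDf_smul (c : ℂ) {f : SmFn 4} (hf : Differentiable ℝ f) (i : Fin 4) :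
    xDf i (c • f) = c • xDf i f := by
  funext x
  show fderiv ℝ (fun y => c • f y) x (Pi.single i 1) = _
  rw [fderiv_fun_const_smul (hf x)]
  simp [xDf]

lemma xDf_sub {f g : SmFn 4} (hf : Differentiable ℝ f) (hg : Differentiable ℝ g) (i : Fin 4) :
    xDf i (f - g) = xDf i f - xDf i g := by
  funext x
  show fderiv ℝ (fun y => f y - g y) x (Pi.single i 1) = _
  rw [fderiv_fun_sub (hf x) (hg x)]
  simp [xDf]

lemma xDf_mul {f g : SmFn 4} (hf : Differentiable ℝ f) (hg : Differentiable ℝ g) (i : Fin 4) :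
    xDf i (f * g) = xDf i f * g + f * xDf i g := by
  funext x
  show fderiv ℝ (fun y => f y * g y) x (Pi.single i 1) = _
  rw [fderiv_fun_mul (hf x) (hg x)]
  simp [xDf]
  ring

lemma xDf_comm {f : SmFn 4} (hf : Sm f) (i j : Fin 4) :
    xDf i (xDf j f) = xDf j (xDf i f) := by
  have hd : ContDiff ℝ (⊤ : ℕ∞) (fderiv ℝ f) := hf.fderiv_right inf_add_one
  funext x
  have hsym : IsSymmSndFDerivAt ℝ f x := hf.contDiffAt.isSymmSndFDerivAt (by rw [minSmoothness_of_isRCLikeNormedField]; exact le_inf2)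
  have e : ∀ v w : Fin 4 → ℝ, fderiv ℝ (fun y => fderiv ℝ f y w) x v
      = fderiv ℝ (fderiv ℝ f) x v w := by
    intro v w
    rw [fderiv_clm_apply (hd.differentiable (by simp) x) (differentiableAt_const w)]
    simp
  show fderiv ℝ (fun y => fderiv ℝ f y (Pi.single j 1)) x (Pi.single i 1) = _
  rw [e, hsym]
  exact (e _ _).symm

/-- The coordinate function `x ↦ x i` as a complex-valued function. -/
def coordC (i : Fin 4) : SmFn 4 := fun x => (x i : ℂ)

lemma Sm.coordC (i : Fin 4) : Sm (StarPaper.coordC i) := by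
  have : StarPaper.coordC i
      = fun x : Fin 4 → ℝ => Complex.ofRealCLM ((ContinuousLinearMap.proj (R := ℝ) i) x) := rfl
  rw [this]
  exact Complex.ofRealCLM.contDiff.comp (ContinuousLinearMap.proj (R := ℝ) (φ := fun _ : Fin 4 => ℝ) i).contDiff

lemma xDf_coordC (i j : Fin 4) :
    xDf i (coordC j) = if j = i then 1 else 0 := by
  funext x
  have h : (coordC j)
      = (Complex.ofRealCLM.comp (ContinuousLinearMap.proj (R := ℝ) j) : (Fin 4 → ℝ) →L[ℝ] ℂ) := rfl
  show fderiv ℝ (coordC j) x (Pi.single i 1) = _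
  rw [h, ContinuousLinearMap.fderiv]
  simp [Pi.single_apply]
  split <;> simp

/-- The expression of the Liouville operator through coordinates. -/
lemma XAct_eq (f : SmFn 4) :
    XAct liouvilleT f = coordC 2 * xDf 2 f + coordC 3 * xDf 3 f := by
  funext x
  simp [XAct, liouvilleT, Fin.sum_univ_four, coordC]

lemma Sm.xact {f : SmFn 4} (hf : Sm f) : Sm (StarPaper.XAct liouvilleT f) := by
  rw [XAct_eq]
  exact ((Sm.coordC 2).mul (hf.xD 2)).add ((Sm.coordC 3).mul (hf.xD 3))

lemma XAct_zero : XAct liouvilleT (0 : SmFn 4) = 0 := by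
  rw [XAct_eq]
  have h0 : xDf 2 (0 : SmFn 4) = 0 := by
    funext x
    show fderiv ℝ (fun _ => (0:ℂ)) x (Pi.single 2 1) = 0
    simp
  have h1 : xDf 3 (0 : SmFn 4) = 0 := by
    funext x
    show fderiv ℝ (fun _ => (0:ℂ)) x (Pi.single 3 1) = 0
    simp
  rw [h0, h1]
  simp

lemma XAct_add {f g : SmFn 4} (hf : Sm f) (hg : Sm g) :
    XAct liouvilleT (f + g) = XAct liouvilleT f + XAct liouvilleT g := by
  rw [XAct_eq, XAct_eq, XAct_eq, xDf_add hf.diff hg.diff, xDf_add hf.diff hg.diff]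
  ring

lemma XAct_smul (c : ℂ) {f : SmFn 4} (hf : Sm f) :
    XAct liouvilleT (c • f) = c • XAct liouvilleT f := by
  rw [XAct_eq, XAct_eq, xDf_smul c hf.diff, xDf_smul c hf.diff]
  simp only [smul_add, mul_smul_comm]

lemma XAct_mul {f g : SmFn 4} (hf : Sm f) (hg : Sm g) :
    XAct liouvilleT (f * g) = XAct liouvilleT f * g + f * XAct liouvilleT g := by
  rw [XAct_eq, XAct_eq, XAct_eq, xDf_mul hf.diff hg.diff, xDf_mul hf.diff hg.diff]
  ring

lemma XAct_sum {α : Type*} (s : Finset α) (f : α → SmFn 4) (h : ∀ a ∈ s, Sm (f a)) :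
    XAct liouvilleT (∑ a ∈ s, f a) = ∑ a ∈ s, XAct liouvilleT (f a) := by
  classical
  induction s using Finset.cons_induction with
  | empty => simpa using XAct_zero
  | cons a s ha ih =>
    rw [Finset.sum_cons, XAct_add (h a (Finset.mem_cons_self a s))
      (Sm.sum s f fun b hb => h b (Finset.mem_cons_of_mem hb)),
      ih fun b hb => h b (Finset.mem_cons_of_mem hb), Finset.sum_cons]

/-- Momentum-direction indicator. -/
def Pc : Fin 4 → ℂ := fun v => if v = 2 ∨ v = 3 then 1 else 0

lemma xDf_XAct {f : SmFn 4} (hf : Sm f) (i : Fin 4) :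
    xDf i (XAct liouvilleT f) = XAct liouvilleT (xDf i f) + Pc i • xDf i f := by
  rw [XAct_eq f, XAct_eq (xDf i f),
    xDf_add (((Sm.coordC 2).mul (hf.xD 2)).diff) (((Sm.coordC 3).mul (hf.xD 3)).diff),
    xDf_mul (Sm.coordC 2).diff (hf.xD 2).diff, xDf_mul (Sm.coordC 3).diff (hf.xD 3).diff,
    xDf_coordC i 2, xDf_coordC i 3, xDf_comm hf i 2, xDf_comm hf i 3]
  fin_cases i <;> simp [Pc] <;> ring

lemma sm_iterD : ∀ {k : ℕ} (v : Fin k → Fin 4) {a : SmFn 4}, Sm a → Sm (iterD xDf v a)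
  | 0, _, _, ha => ha
  | _ + 1, v, _, ha => Sm.xD (sm_iterD (fun t => v t.succ) ha) (v 0)

lemma iterD_add : ∀ {k : ℕ} (v : Fin k → Fin 4) {a b : SmFn 4}, Sm a → Sm b →
    iterD xDf v (a + b) = iterD xDf v a + iterD xDf v b
  | 0, _, _, _, _, _ => rfl
  | _ + 1, v, a, b, ha, hb => by
    show xDf (v 0) (iterD xDf (fun t => v t.succ) (a + b)) = _
    rw [iterD_add (fun t => v t.succ) ha hb,
      xDf_add (sm_iterD _ ha).diff (sm_iterD _ hb).diff]
    rfl

lemma iterD_smul : ∀ {k : ℕ} (v : Fin k → Fin 4) (c : ℂ) {a : SmFn 4}, Sm a →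
    iterD xDf v (c • a) = c • iterD xDf v a
  | 0, _, _, _, _ => rfl
  | _ + 1, v, c, a, ha => by
    show xDf (v 0) (iterD xDf (fun t => v t.succ) (c • a)) = _
    rw [iterD_smul (fun t => v t.succ) c ha, xDf_smul c (sm_iterD _ ha).diff]
    rfl

lemma XAct_iterD : ∀ {k : ℕ} (v : Fin k → Fin 4) {a : SmFn 4}, Sm a →
    XAct liouvilleT (iterD xDf v a)
      = iterD xDf v (XAct liouvilleT a) - (∑ t, Pc (v t)) • iterD xDf v a
  | 0, v, a, ha => by
    show XAct liouvilleT a = XAct liouvilleT a - (∑ t : Fin 0, Pc (v t)) • a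
    simp
  | k + 1, v, a, ha => by
    have hg : Sm (iterD xDf (fun t => v t.succ) a) := sm_iterD _ ha
    have h1 := xDf_XAct hg (v 0)
    have h2 := XAct_iterD (fun t => v t.succ) ha
    show XAct liouvilleT (xDf (v 0) (iterD xDf (fun t => v t.succ) a)) = _
    have h3 : XAct liouvilleT (xDf (v 0) (iterD xDf (fun t => v t.succ) a))
        = xDf (v 0) (XAct liouvilleT (iterD xDf (fun t => v t.succ) a))
          - Pc (v 0) • xDf (v 0) (iterD xDf (fun t => v t.succ) a) := by
      rw [h1]; abel
    rw [h3, h2, xDf_sub (sm_iterD _ ha.xact).diff ((Sm.smul _ hg).diff),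
      xDf_smul _ hg.diff, Fin.sum_univ_succ, add_smul]
    show xDf (v 0) (iterD xDf (fun t => v t.succ) (XAct liouvilleT a))
        - (∑ t : Fin k, Pc (v t.succ)) • xDf (v 0) (iterD xDf (fun t => v t.succ) a)
        - Pc (v 0) • xDf (v 0) (iterD xDf (fun t => v t.succ) a)
      = xDf (v 0) (iterD xDf (fun t => v t.succ) (XAct liouvilleT a))
        - (Pc (v 0) • xDf (v 0) (iterD xDf (fun t => v t.succ) a)
            + (∑ t : Fin k, Pc (v t.succ)) • xDf (v 0) (iterD xDf (fun t => v t.succ) a))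
    abel

lemma piT0_ne {a b : Fin 4} (h : piT0 a b ≠ 0) : Pc a + Pc b = 1 := by
  fin_cases a <;> fin_cases b <;> simp_all [piT0, Pc, Matrix.vecHead, Matrix.vecTail] <;> norm_num

lemma piT1_ne {a b : Fin 4} (h : piT1 a b ≠ 0) : Pc a + Pc b = 2 := by
  fin_cases a <;> fin_cases b <;> simp_all [piT1, Pc, Matrix.vecHead, Matrix.vecTail] <;> norm_num

/-- The `ℏ^d`-weight of the pair of multi-indices `(i, j)` in `moyalTermH`. -/
def wgt {k : ℕ} (d : ℕ) (i j : Fin k → Fin 4) : ℂ :=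
  ∑ T ∈ Finset.univ.powerset.filter (fun T : Finset (Fin k) => T.card = d),
    (∏ t ∈ T, piT1 (i t) (j t)) * ∏ t ∈ Tᶜ, piT0 (i t) (j t)

lemma weight_eq {k d : ℕ} (i j : Fin k → Fin 4) :
    ((∑ t, Pc (i t)) + ∑ t, Pc (j t)) * wgt d i j = ((k : ℂ) + (d : ℂ)) * wgt d i j := by
  classical
  unfold wgt
  rw [Finset.mul_sum, Finset.mul_sum]
  refine Finset.sum_congr rfl fun T hT => ?_
  have hcard : T.card = d := (Finset.mem_filter.1 hT).2
  by_cases hz : (∏ t ∈ T, piT1 (i t) (j t)) * ∏ t ∈ Tᶜ, piT0 (i t) (j t) = 0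
  · rw [hz, mul_zero, mul_zero]
  · have h1 : ∀ t ∈ T, piT1 (i t) (j t) ≠ 0 := by
      intro t ht
      have := (mul_ne_zero_iff.1 hz).1
      exact Finset.prod_ne_zero_iff.1 this t ht
    have h0 : ∀ t ∈ Tᶜ, piT0 (i t) (j t) ≠ 0 := by
      intro t ht
      have := (mul_ne_zero_iff.1 hz).2
      exact Finset.prod_ne_zero_iff.1 this t ht
    have hdk : d ≤ k := by
      rw [← hcard]
      simpa using Finset.card_le_univ T
    have hsum : ((∑ t, Pc (i t)) + ∑ t, Pc (j t)) = ((k : ℂ) + (d : ℂ)) := by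
      rw [← Finset.sum_add_distrib, ← Finset.sum_add_sum_compl T fun t => Pc (i t) + Pc (j t)]
      have e1 : ∑ t ∈ T, (Pc (i t) + Pc (j t)) = (d : ℂ) * 2 := by
        rw [Finset.sum_congr rfl fun t ht => piT1_ne (h1 t ht)]
        simp [hcard, mul_comm]
      have e2 : ∑ t ∈ Tᶜ, (Pc (i t) + Pc (j t)) = ((k - d : ℕ) : ℂ) := by
        rw [Finset.sum_congr rfl fun t ht => piT0_ne (h0 t ht)]
        simp [Finset.card_compl, hcard]
      rw [e1, e2, Nat.cast_sub hdk]
      ring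
    rw [hsum]

/-- `moyalTermH` specialised to our data, written via `wgt`. -/
lemma moyalTermH_eq (k d : ℕ) (a b : SmFn 4) :
    moyalTermH xDf piT0 piT1 k d a b
      = ((-Complex.I / 2) ^ k / (Nat.factorial k : ℂ)) •
          ∑ i : Fin k → Fin 4, ∑ j : Fin k → Fin 4,
            wgt d i j • (iterD xDf i a * iterD xDf j b) := rfl

lemma sm_moyalTermH {k d : ℕ} {a b : SmFn 4} (ha : Sm a) (hb : Sm b) :
    Sm (StarPaper.moyalTermH xDf piT0 piT1 k d a b) := by
  rw [moyalTermH_eq]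
  exact Sm.smul _ (Sm.sum _ _ fun i _ => Sm.sum _ _ fun j _ =>
    Sm.smul _ ((sm_iterD i ha).mul (sm_iterD j hb)))

lemma moyalTermH_add_left {k d : ℕ} {a a' b : SmFn 4} (ha : Sm a) (ha' : Sm a') (hb : Sm b) :
    moyalTermH xDf piT0 piT1 k d (a + a') b
      = moyalTermH xDf piT0 piT1 k d a b + moyalTermH xDf piT0 piT1 k d a' b := by
  rw [moyalTermH_eq, moyalTermH_eq, moyalTermH_eq, ← smul_add, ← Finset.sum_add_distrib]
  congr 1
  refine Finset.sum_congr rfl fun i _ => ?_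
  rw [← Finset.sum_add_distrib]
  refine Finset.sum_congr rfl fun j _ => ?_
  rw [iterD_add i ha ha', add_mul, smul_add]

lemma moyalTermH_smul_left {k d : ℕ} (c : ℂ) {a b : SmFn 4} (ha : Sm a) :
    moyalTermH xDf piT0 piT1 k d (c • a) b
      = c • moyalTermH xDf piT0 piT1 k d a b := by
  rw [moyalTermH_eq, moyalTermH_eq, smul_comm]
  congr 1
  rw [Finset.smul_sum]
  refine Finset.sum_congr rfl fun i _ => ?_
  rw [Finset.smul_sum]
  refine Finset.sum_congr rfl fun j _ => ?_
  rw [iterD_smul i c ha, smul_mul_assoc, smul_comm]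

lemma moyalTermH_add_right {k d : ℕ} {a b b' : SmFn 4} (ha : Sm a) (hb : Sm b) (hb' : Sm b') :
    moyalTermH xDf piT0 piT1 k d a (b + b')
      = moyalTermH xDf piT0 piT1 k d a b + moyalTermH xDf piT0 piT1 k d a b' := by
  rw [moyalTermH_eq, moyalTermH_eq, moyalTermH_eq, ← smul_add, ← Finset.sum_add_distrib]
  congr 1
  refine Finset.sum_congr rfl fun i _ => ?_
  rw [← Finset.sum_add_distrib]
  refine Finset.sum_congr rfl fun j _ => ?_
  rw [iterD_add j hb hb', mul_add, smul_add]

lemma moyalTermH_smul_right {k d : ℕ} (c : ℂ) {a b : SmFn 4} (hb : Sm b) :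
    moyalTermH xDf piT0 piT1 k d a (c • b)
      = c • moyalTermH xDf piT0 piT1 k d a b := by
  rw [moyalTermH_eq, moyalTermH_eq, smul_comm]
  congr 1
  rw [Finset.smul_sum]
  refine Finset.sum_congr rfl fun i _ => ?_
  rw [Finset.smul_sum]
  refine Finset.sum_congr rfl fun j _ => ?_
  rw [iterD_smul j c hb, mul_smul_comm, smul_comm]

/-- The key commutation identity for a single `moyalTermH`. -/
lemma XAct_moyalTermH {k d : ℕ} {a b : SmFn 4} (ha : Sm a) (hb : Sm b) :
    XAct liouvilleT (moyalTermH xDf piT0 piT1 k d a b)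
      = moyalTermH xDf piT0 piT1 k d (XAct liouvilleT a) b
        + moyalTermH xDf piT0 piT1 k d a (XAct liouvilleT b)
        - ((k : ℂ) + (d : ℂ)) • moyalTermH xDf piT0 piT1 k d a b := by
  have hterm : ∀ (i j : Fin k → Fin 4),
      XAct liouvilleT (wgt d i j • (iterD xDf i a * iterD xDf j b))
        = wgt d i j • (iterD xDf i (XAct liouvilleT a) * iterD xDf j b)
          + wgt d i j • (iterD xDf i a * iterD xDf j (XAct liouvilleT b))
          - ((k : ℂ) + (d : ℂ)) • (wgt d i j • (iterD xDf i a * iterD xDf j b)) := by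
    intro i j
    rw [XAct_smul _ ((sm_iterD i ha).mul (sm_iterD j hb)),
      XAct_mul (sm_iterD i ha) (sm_iterD j hb), XAct_iterD i ha, XAct_iterD j hb]
    have := weight_eq (d := d) i j
    calc wgt d i j • ((iterD xDf i (XAct liouvilleT a)
            - (∑ t, Pc (i t)) • iterD xDf i a) * iterD xDf j b
          + iterD xDf i a * (iterD xDf j (XAct liouvilleT b)
            - (∑ t, Pc (j t)) • iterD xDf j b))
        = wgt d i j • (iterD xDf i (XAct liouvilleT a) * iterD xDf j b)
          + wgt d i j • (iterD xDf i a * iterD xDf j (XAct liouvilleT b))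
          - (((∑ t, Pc (i t)) + ∑ t, Pc (j t)) * wgt d i j)
              • (iterD xDf i a * iterD xDf j b) := by
          simp only [sub_mul, mul_sub, smul_mul_assoc, mul_smul_comm, smul_add, smul_sub,
            smul_smul]
          module
      _ = _ := by rw [this, mul_smul]
  rw [moyalTermH_eq k d a b, moyalTermH_eq k d (XAct liouvilleT a) b,
    moyalTermH_eq k d a (XAct liouvilleT b),
    XAct_smul _ (Sm.sum _ _ fun i _ => Sm.sum _ _ fun j _ =>
      Sm.smul _ ((sm_iterD i ha).mul (sm_iterD j hb))),
    XAct_sum _ _ (fun i _ => Sm.sum _ _ fun j _ =>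
      Sm.smul _ ((sm_iterD i ha).mul (sm_iterD j hb)))]
  rw [Finset.sum_congr rfl fun i _ => XAct_sum _ _ fun j _ =>
      Sm.smul _ ((sm_iterD i ha).mul (sm_iterD j hb))]
  rw [Finset.sum_congr rfl fun i _ => Finset.sum_congr rfl fun j _ => hterm i j]
  simp only [Finset.sum_sub_distrib, Finset.sum_add_distrib, ← Finset.smul_sum,
    smul_sub, smul_add]
  rw [smul_comm ((-Complex.I / 2) ^ k / (Nat.factorial k : ℂ)) ((k : ℂ) + (d : ℂ))]

lemma LOp_apply {N : ℕ} (X : Fin N → SmFn N) (F : SmSer N) (m : ℕ) :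
    LOp X F m = (m : ℂ) • F m + XAct X (F m) := rfl

lemma fMulH_apply (F G : SmSer 4) (m : ℕ) :
    fMulH piT0 piT1 F G m
      = ∑ k ∈ Finset.range (m + 1), ∑ d ∈ Finset.range (m - k + 1),
          ∑ l ∈ Finset.range (m - k - d + 1),
            moyalTermH xDf piT0 piT1 k d (F l) (G (m - k - d - l)) := rfl

/-- For the Moyal star-product on `ℝ⁴ = T*T²` built from the
`ℏ`-dependent Poisson matrix `π(ℏ) = π₀ + ℏπ₁`, the classical Liouville vector field
`X = p₁∂_{p₁} + p₂∂_{p₂}` makes `ℏ∂_ℏ + X` a derivation (a quantum Liouville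
operator). -/
theorem torus_example_liouville :
    ∀ F G : SmSer 4, SmSer.Smooth F → SmSer.Smooth G →
      LOp liouvilleT (fMulH piT0 piT1 F G) =
        fMulH piT0 piT1 (LOp liouvilleT F) G
          + fMulH piT0 piT1 F (LOp liouvilleT G) := by
  intro F G hF hG
  funext m
  have hterm : ∀ k d l : ℕ, Sm (moyalTermH xDf piT0 piT1 k d (F l) (G (m - k - d - l))) :=
    fun k d l => sm_moyalTermH (hF l) (hG _)
  show LOp liouvilleT (fMulH piT0 piT1 F G) m
      = fMulH piT0 piT1 (LOp liouvilleT F) G m + fMulH piT0 piT1 F (LOp liouvilleT G) m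
  rw [LOp_apply, fMulH_apply F G m,
    XAct_sum _ _ (fun k _ => Sm.sum _ _ fun d _ => Sm.sum _ _ fun l _ => hterm k d l),
    Finset.sum_congr rfl fun k _ => XAct_sum _ _
      (fun d _ => Sm.sum _ _ fun l _ => hterm k d l),
    Finset.sum_congr rfl fun k _ => Finset.sum_congr rfl fun d _ =>
      XAct_sum _ _ fun l _ => hterm k d l,
    fMulH_apply (LOp liouvilleT F) G m, fMulH_apply F (LOp liouvilleT G) m]
  simp only [Finset.smul_sum]
  simp only [← Finset.sum_add_distrib]
  refine Finset.sum_congr rfl fun k hk => Finset.sum_congr rfl fun d hd =>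
    Finset.sum_congr rfl fun l hl => ?_
  have hk' : k ≤ m := Nat.lt_succ_iff.1 (Finset.mem_range.1 hk)
  have hd' : d ≤ m - k := Nat.lt_succ_iff.1 (Finset.mem_range.1 hd)
  have hl' : l ≤ m - k - d := Nat.lt_succ_iff.1 (Finset.mem_range.1 hl)
  have hnat : k + d + l + (m - k - d - l) = m := by omega
  have hm : (m : ℂ) = (k : ℂ) + (d : ℂ) + (l : ℂ) + ((m - k - d - l : ℕ) : ℂ) := by
    calc (m : ℂ) = ((k + d + l + (m - k - d - l) : ℕ) : ℂ) := by rw [hnat]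
      _ = (k : ℂ) + (d : ℂ) + (l : ℂ) + ((m - k - d - l : ℕ) : ℂ) := by push_cast; ring
  rw [LOp_apply, LOp_apply,
    moyalTermH_add_left (Sm.smul _ (hF l)) (Sm.xact (hF l)) (hG _),
    moyalTermH_smul_left _ (hF l),
    moyalTermH_add_right (hF l) (Sm.smul _ (hG _)) (Sm.xact (hG _)),
    moyalTermH_smul_right _ (hG _),
    XAct_moyalTermH (hF l) (hG _), hm]
  module


end StarPaper
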